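/- Let r(0) > 0 and r_s > 0, and define the sequential returns r^j by the geometric-mean recursion r^j = sqrt(r^{j-1}*r_s). The cumulative capital absorbed by the pool after m LPs, sum of w^j where w^j = TVL^{j-1}*(sqrt(r^{j-1}/r_s) - 1) and TVL^j = TVL^{j-1} + w^j, satisfies TVL^m = f*Vol/r^m, hence TVL^m converges to f*Vol/r_s as m → ∞. -/

import Mathlib

/-- Sequential optimal investments: the pool's TVL satisfies
`TVL m = f*Vol / r m` after each step, and converges to `f*Vol/rs`. -/
theorem stmt_15 (f Vol T0 rs : ℝ) (hf : 0 < f) (hVol : 0 < Vol)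
    (hT0 : 0 < T0) (hrs : 0 < rs) (hge : rs ≤ f * Vol / T0)
    (TVL r : ℕ → ℝ) (h0 : TVL 0 = T0)
    (hr : ∀ j, r j = f * Vol / TVL j)
    (hrec : ∀ j, TVL (j + 1) = TVL j + TVL j * (Real.sqrt (r j / rs) - 1)) :
    (∀ m, TVL m = f * Vol / r m) ∧
    Filter.Tendsto TVL Filter.atTop (nhds (f * Vol / rs)) := by
  set L := f * Vol / rs with hLdef
  have hL : 0 < L := by positivity
  have key : ∀ j, 0 < TVL j → TVL (j + 1) = Real.sqrt (TVL j * L) := by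
    intro j hj
    have hrw : r j / rs = L / TVL j := by
      rw [hr j, hLdef]
      field_simp
    rw [hrec j, hrw]
    have h1 : TVL j + TVL j * (Real.sqrt (L / TVL j) - 1)
        = TVL j * Real.sqrt (L / TVL j) := by ring
    rw [h1, Real.sqrt_div hL.le, Real.sqrt_mul hj.le]
    have hs := Real.mul_self_sqrt hj.le
    field_simp
    nlinarith [hs, Real.sqrt_nonneg L]
  have hpos : ∀ m, 0 < TVL m := by
    intro m
    induction m with
    | zero => rw [h0]; exact hT0
    | succ j ih =>
      rw [key j ih]
      positivity
  have hstep : ∀ j, TVL (j + 1) = Real.sqrt (TVL j * L) := fun j => key j (hpos j)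
  have hfirst : ∀ m, TVL m = f * Vol / r m := by
    intro m
    rw [hr m]
    have := hpos m
    have hfv : 0 < f * Vol := by positivity
    field_simp
  refine ⟨hfirst, ?_⟩
  set d : ℕ → ℝ := fun m => Real.log (TVL m) - Real.log L with hd
  have hdstep : ∀ m, d (m + 1) = d m / 2 := by
    intro m
    have h1 : Real.log (TVL (m + 1)) = (Real.log (TVL m) + Real.log L) / 2 := by
      rw [hstep m, Real.log_sqrt (mul_nonneg (hpos m).le hL.le),
        Real.log_mul (hpos m).ne' hL.ne']
    simp only [hd]
    rw [h1]; ring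
  have hdm : ∀ m, d m = d 0 * (1 / 2) ^ m := by
    intro m
    induction m with
    | zero => simp
    | succ j ih => rw [hdstep j, ih]; ring
  have hd0 : Filter.Tendsto d Filter.atTop (nhds 0) := by
    have : Filter.Tendsto (fun m : ℕ => d 0 * (1 / 2) ^ m) Filter.atTop (nhds (d 0 * 0)) := by
      exact (tendsto_pow_atTop_nhds_zero_of_lt_one (by norm_num) (by norm_num)).const_mul _
    rw [mul_zero] at this
    exact this.congr (fun m => (hdm m).symm)
  have hTVLeq : ∀ m, TVL m = L * Real.exp (d m) := by
    intro m
    rw [hd]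
    simp only [Real.exp_sub, Real.exp_log (hpos m), Real.exp_log hL]
    field_simp
  have : Filter.Tendsto (fun m => L * Real.exp (d m)) Filter.atTop (nhds (L * Real.exp 0)) :=
    ((Real.continuous_exp.tendsto 0).comp hd0).const_mul _
  rw [Real.exp_zero, mul_one] at this
  exact this.congr (fun m => (hTVLeq m).symm)
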